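/- For every real a ≥ 0 and every integer j ≥ 1, Φ(a√(j+2)) − Φ(a√(j+1)) ≤ Φ(a√(j+1)) − Φ(a√j). In particular, taking j = 2, one has Φ(a√4) − Φ(a√3) ≤ Φ(a√3) − Φ(a√2), i.e., q₄ − q₃ ≤ q₃ − q₂ where q_j = Φ(a√j). -/

import Mathlib

open MeasureTheory ProbabilityTheory Real

/-- The standard normal cumulative distribution function
`Φ(x) = (1/√(2π)) ∫_{-∞}^{x} e^{-t²/2} dt`. -/
noncomputable def stdGaussianCDF (x : ℝ) : ℝ :=
  (Real.sqrt (2 * Real.pi))⁻¹ * ∫ t in Set.Iic x, Real.exp (-t ^ 2 / 2)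

lemma gaussian_integrable : Integrable (fun t : ℝ => Real.exp (-t ^ 2 / 2)) := by
  have h := integrable_exp_neg_mul_sq (b := (1:ℝ)/2) (by norm_num)
  convert h using 2 with t
  ring_nf

noncomputable def gaussG (y : ℝ) : ℝ :=
  (Real.sqrt (2 * Real.pi))⁻¹ * ∫ t in (0:ℝ)..y, Real.exp (-t ^ 2 / 2)

lemma stdGaussianCDF_eq (y : ℝ) : stdGaussianCDF y = gaussG y + stdGaussianCDF 0 := by
  unfold stdGaussianCDF gaussG
  rw [← intervalIntegral.integral_Iic_sub_Iic gaussian_integrable.integrableOn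
      gaussian_integrable.integrableOn]
  ring

lemma hasDerivAt_gaussG (y : ℝ) :
    HasDerivAt gaussG ((Real.sqrt (2 * Real.pi))⁻¹ * Real.exp (-y ^ 2 / 2)) y := by
  have hcont : Continuous fun t : ℝ => Real.exp (-t ^ 2 / 2) := by continuity
  have h := intervalIntegral.integral_hasDerivAt_right
    (a := 0) (b := y) gaussian_integrable.intervalIntegrable
    (hcont.stronglyMeasurableAtFilter _ _) hcont.continuousAt
  unfold gaussG
  exact h.const_mul _

theorem stmt18 (a : ℝ) (ha : 0 ≤ a) :
    (∀ j : ℕ, 1 ≤ j →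
      stdGaussianCDF (a * Real.sqrt ((j : ℝ) + 2)) - stdGaussianCDF (a * Real.sqrt ((j : ℝ) + 1))
        ≤ stdGaussianCDF (a * Real.sqrt ((j : ℝ) + 1)) - stdGaussianCDF (a * Real.sqrt j))
      ∧ stdGaussianCDF (a * Real.sqrt 4) - stdGaussianCDF (a * Real.sqrt 3)
        ≤ stdGaussianCDF (a * Real.sqrt 3) - stdGaussianCDF (a * Real.sqrt 2) := by
  set c : ℝ := (Real.sqrt (2 * Real.pi))⁻¹ with hc
  have hc0 : 0 ≤ c := by positivity
  set g : ℝ → ℝ := fun x => gaussG (a * Real.sqrt x) with hg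
  -- derivative of g at x > 0
  have hderiv : ∀ x : ℝ, 0 < x →
      HasDerivAt g (c * Real.exp (-(a ^ 2 * x) / 2) * (a * (1 / (2 * Real.sqrt x)))) x := by
    intro x hx
    have hsq : HasDerivAt (fun u : ℝ => a * Real.sqrt u) (a * (1 / (2 * Real.sqrt x))) x :=
      ((Real.hasDerivAt_sqrt (ne_of_gt hx)).const_mul a)
    have hG := hasDerivAt_gaussG (a * Real.sqrt x)
    have h := hG.comp x hsq
    rw [mul_pow, Real.sq_sqrt hx.le] at h
    exact h
  have hderiv_eq : ∀ x ∈ Set.Ioi (1:ℝ),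
      deriv g x = c * Real.exp (-(a ^ 2 * x) / 2) * (a * (1 / (2 * Real.sqrt x))) := by
    intro x hx
    exact (hderiv x (lt_trans one_pos hx)).deriv
  have hdiff : DifferentiableOn ℝ g (interior (Set.Ici (1:ℝ))) := by
    rw [interior_Ici]
    intro x hx
    exact ((hderiv x (lt_trans one_pos hx)).differentiableAt).differentiableWithinAt
  have hcont : ContinuousOn g (Set.Ici (1:ℝ)) := by
    intro x hx
    exact ((hderiv x (lt_of_lt_of_le one_pos hx)).differentiableAt).continuousAt.continuousWithinAt
  have hanti : AntitoneOn (deriv g) (interior (Set.Ici (1:ℝ))) := by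
    rw [interior_Ici]
    intro x hx y hy hxy
    rw [hderiv_eq x hx, hderiv_eq y hy]
    have hx0 : (0:ℝ) < x := lt_trans one_pos hx
    have hy0 : (0:ℝ) < y := lt_trans one_pos hy
    have h1 : Real.exp (-(a ^ 2 * y) / 2) ≤ Real.exp (-(a ^ 2 * x) / 2) := by
      apply Real.exp_le_exp.mpr
      nlinarith [sq_nonneg a]
    have h2 : 1 / (2 * Real.sqrt y) ≤ 1 / (2 * Real.sqrt x) := by
      apply one_div_le_one_div_of_le (by positivity)
      have := Real.sqrt_le_sqrt hxy
      linarith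
    have hex : 0 ≤ Real.exp (-(a ^ 2 * y) / 2) := (Real.exp_pos _).le
    have hsx : 0 ≤ 1 / (2 * Real.sqrt y) := by positivity
    calc c * Real.exp (-(a ^ 2 * y) / 2) * (a * (1 / (2 * Real.sqrt y)))
        ≤ c * Real.exp (-(a ^ 2 * x) / 2) * (a * (1 / (2 * Real.sqrt y))) := by
          apply mul_le_mul_of_nonneg_right (by nlinarith) (by positivity)
      _ ≤ c * Real.exp (-(a ^ 2 * x) / 2) * (a * (1 / (2 * Real.sqrt x))) := by
          apply mul_le_mul_of_nonneg_left (by nlinarith [Real.exp_pos (-(a ^ 2 * x) / 2)])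
          positivity
  have hconc : ConcaveOn ℝ (Set.Ici (1:ℝ)) g :=
    hanti.concaveOn_of_deriv (convex_Ici 1) hcont hdiff
  -- key inequality for real x ≥ 1
  have key : ∀ x : ℝ, 1 ≤ x → g (x + 2) - g (x + 1) ≤ g (x + 1) - g x := by
    intro x hx
    have h := hconc.2 hx (show x + 2 ∈ Set.Ici (1:ℝ) by simp; linarith)
      (show (0:ℝ) ≤ 1/2 by norm_num) (show (0:ℝ) ≤ 1/2 by norm_num) (by norm_num)
    have heq : (1/2 : ℝ) • x + (1/2 : ℝ) • (x + 2) = x + 1 := by push_cast [smul_eq_mul]; ring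
    rw [heq] at h
    simp only [smul_eq_mul] at h
    linarith
  constructor
  · intro j hj
    have hj1 : (1:ℝ) ≤ (j:ℝ) := by exact_mod_cast hj
    have h := key (j:ℝ) hj1
    simp only [hg] at h
    rw [stdGaussianCDF_eq (a * Real.sqrt ((j:ℝ) + 2)), stdGaussianCDF_eq (a * Real.sqrt ((j:ℝ) + 1)),
      stdGaussianCDF_eq (a * Real.sqrt (j:ℝ))]
    linarith
  · have h := key 2 one_le_two
    simp only [hg] at h
    norm_num at h
    rw [stdGaussianCDF_eq (a * Real.sqrt 4), stdGaussianCDF_eq (a * Real.sqrt 3),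
      stdGaussianCDF_eq (a * Real.sqrt 2)]
    rw [show Real.sqrt 4 = 2 by rw [show (4:ℝ) = 2 ^ 2 by norm_num]; exact Real.sqrt_sq (by norm_num)]
    linarith
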